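/- Let v ∈ ℝⁿ, Q̃ ∈ ℝ^{n×n}, and let A be a subset of {1,...,n} of size b chosen uniformly at random. Let v_{[A]} denote the vector equal to v on coordinates in A and 0 elsewhere. Then E[v_{[A]}ᵀ Q̃ v_{[A]}] = (b/n)[(1 - (b-1)/(n-1)) ∑_{i=1}^n Q̃_{ii} v_i² + ((b-1)/(n-1)) vᵀ Q̃ v]. -/

import Mathlib

open Finset

lemma count_subsets_containing {α : Type*} [DecidableEq α] (s t : Finset α) (ht : t ⊆ s)
    (b : ℕ) (hb : t.card ≤ b) :
    ((Finset.powersetCard b s).filter (fun A => t ⊆ A)).card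
      = (s.card - t.card).choose (b - t.card) := by
  rw [← Finset.card_sdiff_of_subset ht, ← Finset.card_powersetCard (b - t.card) (s \ t)]
  apply Finset.card_nbij' (fun A => A \ t) (fun B => B ∪ t)
  · intro A hA
    simp only [Finset.mem_coe, Finset.mem_filter, Finset.mem_powersetCard] at hA ⊢
    obtain ⟨⟨hAs, hAc⟩, htA⟩ := hA
    exact ⟨Finset.sdiff_subset_sdiff hAs le_rfl, by rw [Finset.card_sdiff_of_subset htA, hAc]⟩
  · intro B hB
    simp only [Finset.mem_coe, Finset.mem_filter, Finset.mem_powersetCard] at hB ⊢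
    obtain ⟨hBs, hBc⟩ := hB
    have hdisj : Disjoint B t := Finset.disjoint_of_subset_left hBs Finset.sdiff_disjoint
    refine ⟨⟨Finset.union_subset (hBs.trans Finset.sdiff_subset) ht, ?_⟩,
      Finset.subset_union_right⟩
    rw [Finset.card_union_of_disjoint hdisj, hBc]
    omega
  · intro A hA
    simp only [Finset.mem_coe, Finset.mem_filter] at hA
    exact Finset.sdiff_union_of_subset hA.2
  · intro B hB
    simp only [Finset.mem_coe, Finset.mem_powersetCard] at hB
    exact Finset.union_sdiff_cancel_right
      (Finset.disjoint_of_subset_left hB.1 Finset.sdiff_disjoint)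

lemma count_subsets_containing_zero {α : Type*} [DecidableEq α] (s t : Finset α)
    (b : ℕ) (hb : b < t.card) :
    ((Finset.powersetCard b s).filter (fun A => t ⊆ A)).card = 0 := by
  rw [Finset.card_eq_zero, Finset.filter_eq_empty_iff]
  intro A hA htA
  rw [Finset.mem_powersetCard] at hA
  have := Finset.card_le_card htA
  omega

/-- Lemma 1 (first part): expectation of the censored quadratic form over a
uniformly random `b`-element subset `A` of `{1,…,n}`. -/
theorem stmt0 (n b : ℕ) (hn : 2 ≤ n) (hb1 : 1 ≤ b) (hbn : b ≤ n)
    (v : Fin n → ℝ) (Q : Matrix (Fin n) (Fin n) ℝ) :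
    (∑ A ∈ Finset.powersetCard b (Finset.univ : Finset (Fin n)),
        ∑ i, ∑ j, (if i ∈ A then v i else 0) * Q i j * (if j ∈ A then v j else 0))
      / (n.choose b : ℝ)
    = ((b : ℝ) / n) *
        ((1 - ((b : ℝ) - 1) / ((n : ℝ) - 1)) * (∑ i, Q i i * (v i) ^ 2)
          + (((b : ℝ) - 1) / ((n : ℝ) - 1)) * (∑ i, ∑ j, v i * Q i j * v j)) := by
  set P := Finset.powersetCard b (Finset.univ : Finset (Fin n)) with hP
  set C : ℝ := (n.choose b : ℝ) with hC
  have hCpos : 0 < C := by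
    have := Nat.choose_pos hbn
    positivity
  have hn0 : (n : ℝ) ≠ 0 := by positivity
  have hn1 : (n : ℝ) - 1 ≠ 0 := by
    have : (2 : ℝ) ≤ n := by exact_mod_cast hn
    linarith
  set c1 : ℝ := (b : ℝ) / n * C with hc1
  set c2 : ℝ := (b : ℝ) * ((b : ℝ) - 1) / ((n : ℝ) * ((n : ℝ) - 1)) * C with hc2
  -- natural number identity 1
  have h1 : (n : ℝ) * ((n - 1).choose (b - 1) : ℝ) = C * b := by
    obtain ⟨m, rfl⟩ : ∃ m, n = m + 1 := ⟨n - 1, by omega⟩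
    obtain ⟨k, rfl⟩ : ∃ k, b = k + 1 := ⟨b - 1, by omega⟩
    simp only [Nat.add_sub_cancel]
    have h := Nat.add_one_mul_choose_eq m k
    rw [hC]
    exact_mod_cast h
  -- value of card for i = j
  have hval1 : ∀ i : Fin n, ((P.filter (fun A => i ∈ A ∧ i ∈ A)).card : ℝ) = c1 := by
    intro i
    have : (P.filter (fun A => i ∈ A ∧ i ∈ A)) = (P.filter (fun A => ({i} : Finset (Fin n)) ⊆ A)) := by
      apply Finset.filter_congr
      intro A _
      simp
    rw [this, count_subsets_containing _ _ (Finset.subset_univ _) b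
      (by simpa using hb1)]
    simp only [Finset.card_univ, Fintype.card_fin, Finset.card_singleton]
    rw [hc1]
    field_simp
    linarith [h1]
  -- value of card for i ≠ j
  have hval2 : ∀ i j : Fin n, i ≠ j → ((P.filter (fun A => i ∈ A ∧ j ∈ A)).card : ℝ) = c2 := by
    intro i j hij
    have hpair : (P.filter (fun A => i ∈ A ∧ j ∈ A))
        = (P.filter (fun A => ({i, j} : Finset (Fin n)) ⊆ A)) := by
      apply Finset.filter_congr
      intro A _
      simp [Finset.insert_subset_iff]
    have hcard2 : ({i, j} : Finset (Fin n)).card = 2 := Finset.card_pair hij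
    rcases le_or_gt 2 b with hb2 | hb2
    · rw [hpair, count_subsets_containing _ _ (Finset.subset_univ _) b (by omega)]
      simp only [Finset.card_univ, Fintype.card_fin, hcard2]
      have h2 : ((n : ℝ) - 1) * ((n - 2).choose (b - 2) : ℝ)
          = ((n - 1).choose (b - 1) : ℝ) * ((b : ℝ) - 1) := by
        obtain ⟨m, hm⟩ : ∃ m, n = m + 2 := ⟨n - 2, by omega⟩
        obtain ⟨k, hk⟩ : ∃ k, b = k + 2 := ⟨b - 2, by omega⟩
        subst hm hk
        have : (m + 2 : ℕ) - 1 = m + 1 := by omega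
        have hb' : (k + 2 : ℕ) - 1 = k + 1 := by omega
        simp only [this, hb', Nat.add_sub_cancel]
        have := congrArg (Nat.cast : ℕ → ℝ) (Nat.add_one_mul_choose_eq m k)
        push_cast at this ⊢
        linarith
      rw [hc2]
      field_simp
      nlinarith [h1, h2]
    · rw [hpair, count_subsets_containing_zero _ _ b (by omega)]
      have hb' : b = 1 := by omega
      rw [hc2, hb']
      norm_num
  -- rewrite the numerator
  have hnum : (∑ A ∈ P, ∑ i, ∑ j, (if i ∈ A then v i else 0) * Q i j * (if j ∈ A then v j else 0))
      = ∑ i, ∑ j, ((P.filter (fun A => i ∈ A ∧ j ∈ A)).card : ℝ) * (v i * Q i j * v j) := by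
    rw [Finset.sum_comm]
    refine Finset.sum_congr rfl fun i _ => ?_
    rw [Finset.sum_comm]
    refine Finset.sum_congr rfl fun j _ => ?_
    have key : ∀ A : Finset (Fin n),
        (if i ∈ A then v i else 0) * Q i j * (if j ∈ A then v j else 0)
          = if i ∈ A ∧ j ∈ A then v i * Q i j * v j else 0 := by
      intro A
      by_cases h1 : i ∈ A <;> by_cases h2 : j ∈ A <;> simp [h1, h2]
    simp_rw [key]
    rw [← Finset.sum_filter, Finset.sum_const, nsmul_eq_mul]
  rw [hnum]
  have hsplit : (∑ i, ∑ j, ((P.filter (fun A => i ∈ A ∧ j ∈ A)).card : ℝ) * (v i * Q i j * v j))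
      = c2 * (∑ i, ∑ j, v i * Q i j * v j) + (c1 - c2) * (∑ i, Q i i * (v i) ^ 2) := by
    have step : ∀ i : Fin n,
        (∑ j, ((P.filter (fun A => i ∈ A ∧ j ∈ A)).card : ℝ) * (v i * Q i j * v j))
          = c2 * (∑ j, v i * Q i j * v j) + (c1 - c2) * (Q i i * (v i) ^ 2) := by
      intro i
      have ptw : ∀ j : Fin n,
          ((P.filter (fun A => i ∈ A ∧ j ∈ A)).card : ℝ) * (v i * Q i j * v j)
            = c2 * (v i * Q i j * v j)
              + (if i = j then (c1 - c2) * (Q i i * (v i) ^ 2) else 0) := by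
        intro j
        by_cases h : i = j
        · subst h
          rw [hval1 i, if_pos rfl]
          ring
        · rw [hval2 i j h]
          simp [h]
      simp_rw [ptw]
      rw [Finset.sum_add_distrib, ← Finset.mul_sum, Finset.sum_ite_eq]
      simp
    simp_rw [step]
    rw [Finset.sum_add_distrib, ← Finset.mul_sum, ← Finset.mul_sum]
  rw [hsplit, hc1, hc2]
  field_simp
  ring
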